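/- For a median graph (X,G), the following are equivalent: (i) the adjacency graph on hyperplanes is locally finite; (ii) each nontrivial half-space is non-nested with or a successor of only finitely many others; (iii) G is locally finite and all hyperplanes are finite. -/
import Mathlib


open SimpleGraph

variable {X : Type*}

/-- The geodesic interval between `x` and `y`. -/
def interval (G : SimpleGraph X) (x y : X) : Set X :=
  {z | G.dist x z + G.dist z y = G.dist x y}

/-- A set is convex if it contains all geodesics between its points. -/
def IsConvexSet (G : SimpleGraph X) (A : Set X) : Prop :=
  ∀ x ∈ A, ∀ y ∈ A, interval G x y ⊆ A

/-- A median graph: connected, and every triple has a unique median. -/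
def IsMedianGraph (G : SimpleGraph X) : Prop :=
  G.Connected ∧ ∀ x y z : X, ∃! m : X,
    m ∈ interval G x y ∧ m ∈ interval G y z ∧ m ∈ interval G z x

/-- The cone at `y` away from `x`. -/
def cone (G : SimpleGraph X) (x y : X) : Set X :=
  {z | y ∈ interval G x z}

/-- A half-space: a convex set with convex complement. -/
def IsHalfspace (G : SimpleGraph X) (H : Set X) : Prop :=
  IsConvexSet G H ∧ IsConvexSet G Hᶜ

/-- Convex hull. -/
def convexHullG (G : SimpleGraph X) (A : Set X) : Set X :=
  ⋂₀ {B : Set X | IsConvexSet G B ∧ A ⊆ B}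

/-- Inward edge boundary of a set. -/
def edgeBoundaryIn (G : SimpleGraph X) (H : Set X) : Set (X × X) :=
  {e | G.Adj e.1 e.2 ∧ e.1 ∉ H ∧ e.2 ∈ H}

/-- Two sets are nested if one of the four corners is empty. -/
def Nested (A B : Set X) : Prop :=
  A ∩ B = ∅ ∨ A ∩ Bᶜ = ∅ ∨ Aᶜ ∩ B = ∅ ∨ Aᶜ ∩ Bᶜ = ∅

open Classical in
noncomputable def medianOf (G : SimpleGraph X) (x y z : X) : X :=
  if h : ∃! m : X, m ∈ interval G x y ∧ m ∈ interval G y z ∧ m ∈ interval G z x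
  then h.choose else x

open Classical in
noncomputable def projOn (G : SimpleGraph X) (A : Set X) (x : X) : X :=
  if h : ∃ p, p ∈ A ∧ ∀ a ∈ A, p ∈ interval G x a then h.choose else x


/-- Edges crossing out of a set. -/
def crossEdges (G : SimpleGraph X) (A : Set X) : Set (X × X) :=
  {e | G.Adj e.1 e.2 ∧ e.1 ∈ A ∧ e.2 ∉ A}

/-- Total vertex boundary of a set. -/
def vBoundary (G : SimpleGraph X) (A : Set X) : Set X :=
  {x | ∃ y, G.Adj x y ∧ ((x ∈ A ∧ y ∉ A) ∨ (x ∉ A ∧ y ∈ A))}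

/-- Two sets are non-nested if all four corners are nonempty. -/
def NonNested (A B : Set X) : Prop :=
  (A ∩ B).Nonempty ∧ (A ∩ Bᶜ).Nonempty ∧ (Aᶜ ∩ B).Nonempty ∧ (Aᶜ ∩ Bᶜ).Nonempty

/-- `H` is a successor of `K`: both are half-spaces, `K ⊊ H`, with no half-space
strictly in between. -/
def Successor (G : SimpleGraph X) (H K : Set X) : Prop :=
  IsHalfspace G H ∧ IsHalfspace G K ∧ K ⊂ H ∧
    ¬ ∃ L : Set X, IsHalfspace G L ∧ K ⊂ L ∧ L ⊂ H

/-- Adjacency of the hyperplanes of half-spaces `H`, `K`. -/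
def HypAdj (G : SimpleGraph X) (H K : Set X) : Prop :=
  H = K ∨ H = Kᶜ ∨ NonNested H K ∨
  Successor G H K ∨ Successor G K H ∨
  Successor G Hᶜ K ∨ Successor G K Hᶜ ∨
  Successor G H Kᶜ ∨ Successor G Kᶜ H ∨
  Successor G Hᶜ Kᶜ ∨ Successor G Kᶜ Hᶜ

/-- The Hamming cube on `{0,1}^n`: strings adjacent iff they differ in exactly one bit. -/
def hammingCube (n : ℕ) : SimpleGraph (Fin n → Bool) :=
  SimpleGraph.fromRel (fun a b => ∃! i : Fin n, a i ≠ b i)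

/-- Oriented edges `e`, `f` are parallel sides of a square (4-cycle). -/
def SquareParallel (G : SimpleGraph X) (e f : X × X) : Prop :=
  G.Adj e.1 e.2 ∧ G.Adj f.1 f.2 ∧ G.Adj e.1 f.1 ∧ G.Adj e.2 f.2 ∧ e.1 ≠ f.2 ∧ e.2 ≠ f.1

namespace MedAux

variable {G : SimpleGraph X}

lemma mem_interval {x y z : X} :
    z ∈ interval G x y ↔ G.dist x z + G.dist z y = G.dist x y := Iff.rfl

lemma left_mem_interval {x y : X} : x ∈ interval G x y := by
  simp [interval, SimpleGraph.dist_self]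

lemma right_mem_interval {x y : X} : y ∈ interval G x y := by
  simp [interval, SimpleGraph.dist_self]

lemma dcomm (x y : X) : G.dist x y = G.dist y x := SimpleGraph.dist_comm

lemma interval_comm {x y z : X} (h : z ∈ interval G x y) : z ∈ interval G y x := by
  simp only [mem_interval] at h ⊢
  rw [dcomm y z, dcomm z x, dcomm y x]
  omega

lemma adj_dist {a b : X} (h : G.Adj a b) : G.dist a b = 1 :=
  SimpleGraph.dist_eq_one_iff_adj.mpr h

lemma dist_one_adj {a b : X} (h : G.dist a b = 1) : G.Adj a b :=
  SimpleGraph.dist_eq_one_iff_adj.mp h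

section conn
variable (hc : G.Connected)
include hc

lemma dtri (x y z : X) : G.dist x z ≤ G.dist x y + G.dist y z :=
  hc.dist_triangle

lemma deq {x y : X} (h : G.dist x y = 0) : x = y := hc.dist_eq_zero_iff.mp h

lemma dpos {x y : X} (h : x ≠ y) : 0 < G.dist x y := hc.pos_dist_of_ne h

/-- In an interval of an edge there are only the endpoints. -/
lemma interval_adj {x y z : X} (hxy : G.Adj x y) (hz : z ∈ interval G x y) :
    z = x ∨ z = y := by
  rw [mem_interval, adj_dist hxy] at hz
  have : G.dist x z = 0 ∨ G.dist z y = 0 := by omega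
  rcases this with h | h
  · exact Or.inl (deq hc h).symm
  · exact Or.inr (deq hc h)

lemma chain1 {x y z u : X} (hz : z ∈ interval G x y) (hu : u ∈ interval G x z) :
    u ∈ interval G x y ∧ z ∈ interval G u y := by
  rw [mem_interval] at hz hu ⊢
  have t1 := dtri hc x u y
  have t2 := dtri hc u z y
  have t3 := dtri hc u y z  -- not needed maybe
  have t4 := dtri hc x y z
  constructor
  · omega
  · rw [mem_interval]; omega

/-- If `x1 ∈ I(x,y)` and `z ∈ I(x1,y)` then `z ∈ I(x,y)` and `x1 ∈ I(x,z)`. -/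
lemma chain2 {x y x1 z : X} (hx1 : x1 ∈ interval G x y) (hz : z ∈ interval G x1 y) :
    z ∈ interval G x y ∧ x1 ∈ interval G x z := by
  have h1 := chain1 hc (interval_comm hx1) (interval_comm hz)
  exact ⟨interval_comm h1.1, interval_comm h1.2⟩

lemma exists_step {x y : X} {n : ℕ} (h : G.dist x y = n + 1) :
    ∃ z, G.Adj x z ∧ G.dist z y = n := by
  obtain ⟨p, hp⟩ := SimpleGraph.exists_walk_of_dist_ne_zero (by omega : G.dist x y ≠ 0)
  cases p with
  | nil => rw [SimpleGraph.Walk.length_nil] at hp; omega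
  | cons hadj q =>
    rename_i v
    refine ⟨v, hadj, ?_⟩
    have h1 : G.dist v y ≤ n := by
      have := SimpleGraph.dist_le q
      rw [SimpleGraph.Walk.length_cons] at hp
      omega
    have h2 := dtri hc x v y
    rw [adj_dist hadj] at h2
    omega

end conn

section med
variable (hG : IsMedianGraph G)
include hG

lemma med_exists (x y z : X) :
    ∃ m, (m ∈ interval G x y ∧ m ∈ interval G y z ∧ m ∈ interval G z x) ∧
      ∀ m', (m' ∈ interval G x y ∧ m' ∈ interval G y z ∧ m' ∈ interval G z x) → m' = m :=
  hG.2 x y z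

/-- Median graphs are "bipartite": no vertex is equidistant from two adjacent vertices. -/
lemma bip {x y u : X} (hxy : G.Adj x y) : G.dist u x ≠ G.dist u y := by
  intro heq
  obtain ⟨m, ⟨h1, h2, h3⟩, _⟩ := med_exists hG u x y
  rcases interval_adj hG.1 hxy h2 with hm | hm
  · rw [hm] at h3
    rw [mem_interval, adj_dist hxy.symm, dcomm x u, dcomm y u] at h3
    omega
  · rw [hm] at h1
    rw [mem_interval, adj_dist hxy.symm] at h1
    omega

lemma adj_dist_cases {a b u : X} (h : G.Adj a b) :
    G.dist u b = G.dist u a + 1 ∨ G.dist u a = G.dist u b + 1 := by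
  have t1 := dtri hG.1 u a b
  have t2 := dtri hG.1 u b a
  rw [adj_dist h] at t1
  rw [adj_dist h.symm] at t2
  have := bip hG (u := u) h
  omega

/-- Every vertex is on one side of an edge. -/
lemma edge_or {w b z : X} (h : G.Adj w b) :
    w ∈ interval G b z ∨ b ∈ interval G w z := by
  rcases adj_dist_cases hG h.symm (u := z) with h1 | h1
  · right
    rw [mem_interval, adj_dist h, dcomm z w, dcomm z b] at *
    omega
  · left
    rw [mem_interval, adj_dist h.symm, dcomm z w, dcomm z b] at *
    omega

omit hG in
lemma edge_not_both {w b z : X} (h : G.Adj w b) :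
    ¬(w ∈ interval G b z ∧ b ∈ interval G w z) := by
  rintro ⟨h1, h2⟩
  rw [mem_interval, adj_dist h.symm] at h1
  rw [mem_interval, adj_dist h] at h2
  omega

/-- Quadrangle condition. -/
lemma quad {u z x y : X} (hzx : G.Adj z x) (hzy : G.Adj z y) (hne : x ≠ y)
    (hx : G.dist u z = G.dist u x + 1) (hy : G.dist u y = G.dist u x) :
    ∃ t, G.Adj x t ∧ G.Adj y t ∧ G.dist u t + 1 = G.dist u x := by
  have hc := hG.1
  have hxy2 : G.dist x y = 2 := by
    have t1 := dtri hc x z y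
    rw [adj_dist hzx.symm, adj_dist hzy] at t1
    have hne1 : G.dist x y ≠ 1 := by
      intro h1
      exact bip hG (dist_one_adj h1) (u := u) hy.symm
    have hne0 : G.dist x y ≠ 0 := fun h0 => hne (deq hc h0)
    omega
  obtain ⟨m, ⟨h1, h2, h3⟩, _⟩ := med_exists hG x y u
  rw [mem_interval, hxy2] at h1
  rw [mem_interval] at h2 h3
  have hx0 : G.dist x m ≠ 0 := by
    intro h0
    have hm : m = x := (deq hc h0).symm
    rw [hm] at h2
    have e1 := dcomm (G := G) y x
    have e2 := dcomm (G := G) x u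
    have e3 := dcomm (G := G) y u
    omega
  have hy0 : G.dist m y ≠ 0 := by
    intro h0
    have hm : m = y := deq hc h0
    rw [hm] at h3
    have e1 := dcomm (G := G) m y
    have e2 := dcomm (G := G) y x
    omega
  have hxm : G.dist x m = 1 := by omega
  have hmy : G.dist m y = 1 := by omega
  have hadjxm : G.Adj x m := dist_one_adj hxm
  have hadjym : G.Adj y m := dist_one_adj (by rw [dcomm]; exact hmy)
  refine ⟨m, hadjxm, hadjym, ?_⟩
  rw [dcomm m x] at h3
  omega

end med
open Classical
variable {G : SimpleGraph X}

section geo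
variable (hc : G.Connected)
include hc

omit hc in
/-- One step from `x` along a geodesic towards `y`. -/
noncomputable def stepv (y x : X) : X :=
  if h : ∃ z, G.Adj x z ∧ G.dist z y + 1 = G.dist x y then h.choose else y

lemma stepv_spec {x y : X} (h : G.dist x y ≠ 0) :
    G.Adj x (stepv (G := G) y x) ∧ G.dist (stepv (G := G) y x) y + 1 = G.dist x y := by
  obtain ⟨n, hn⟩ : ∃ n, G.dist x y = n + 1 := ⟨G.dist x y - 1, by omega⟩
  obtain ⟨z, hz1, hz2⟩ := exists_step hc hn
  have hex : ∃ z, G.Adj x z ∧ G.dist z y + 1 = G.dist x y := ⟨z, hz1, by omega⟩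
  rw [stepv, dif_pos hex]
  exact hex.choose_spec

omit hc in
/-- The geodesic sequence from `x` to `y`. -/
noncomputable def geo (x y : X) (n : ℕ) : X :=
  (stepv (G := G) y)^[n] x

omit hc in
@[simp] lemma geo_zero {x y : X} : geo (G := G) x y 0 = x := rfl

omit hc in
lemma geo_succ {x y : X} (n : ℕ) :
    geo (G := G) x y (n + 1) = stepv (G := G) y (geo (G := G) x y n) :=
  Function.iterate_succ_apply' _ _ _

lemma geo_dist {x y : X} : ∀ k, k ≤ G.dist x y →
    G.dist (geo (G := G) x y k) y + k = G.dist x y := by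
  intro k
  induction k with
  | zero => simp
  | succ n ih =>
    intro hk
    have h1 := ih (by omega)
    have h2 : G.dist (geo (G := G) x y n) y ≠ 0 := by omega
    have := (stepv_spec hc h2).2
    rw [geo_succ]
    omega

lemma geo_adj {x y : X} {k : ℕ} (hk : k < G.dist x y) :
    G.Adj (geo (G := G) x y k) (geo (G := G) x y (k + 1)) := by
  have h1 := geo_dist hc (x := x) (y := y) k (by omega)
  have h2 : G.dist (geo (G := G) x y k) y ≠ 0 := by omega
  rw [geo_succ]
  exact (stepv_spec hc h2).1

lemma geo_last {x y : X} : geo (G := G) x y (G.dist x y) = y := by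
  have h1 := geo_dist hc (x := x) (y := y) (G.dist x y) le_rfl
  exact deq hc (by omega)

/-- Distances along a geodesic chain. -/
lemma chain_dist {g : ℕ → X} {n : ℕ}
    (hadj : ∀ i, i < n → G.Adj (g i) (g (i + 1)))
    (hd : G.dist (g 0) (g n) = n) :
    ∀ i j, i ≤ j → j ≤ n → G.dist (g i) (g j) = j - i := by
  have hle : ∀ i k, i + k ≤ n → G.dist (g i) (g (i + k)) ≤ k := by
    intro i k
    induction k with
    | zero => simp [SimpleGraph.dist_self]
    | succ l ih =>
      intro h
      have h1 := ih (by omega)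
      have h2 := dtri hc (g i) (g (i + l)) (g (i + l + 1))
      have h3 := adj_dist (hadj (i + l) (by omega))
      have : i + (l + 1) = i + l + 1 := by omega
      rw [this]
      omega
  intro i j hij hjn
  have h1 : G.dist (g i) (g j) ≤ j - i := by
    have := hle i (j - i) (by omega)
    rwa [show i + (j - i) = j by omega] at this
  have h2 : G.dist (g 0) (g i) ≤ i := by
    have := hle 0 i (by omega); simpa using this
  have h3 : G.dist (g j) (g n) ≤ n - j := by
    have := hle j (n - j) (by omega)
    rwa [show j + (n - j) = n by omega] at this
  have t1 := dtri hc (g 0) (g i) (g n)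
  have t2 := dtri hc (g i) (g j) (g n)
  omega

end geo
section block
variable (hG : IsMedianGraph G)

lemma mem_cone {b w z : X} : z ∈ cone G b w ↔ w ∈ interval G b z := Iff.rfl

lemma cone_dist {b w z : X} (hadj : G.Adj b w) (h : z ∈ cone G b w) :
    G.dist b z = G.dist w z + 1 := by
  have h2 := h
  rw [mem_cone, mem_interval, adj_dist hadj] at h2
  omega

include hG in
lemma cone_dist' {b w z : X} (hadj : G.Adj b w) (h : z ∉ cone G b w) :
    G.dist w z = G.dist b z + 1 := by
  rcases edge_or hG hadj.symm (z := z) with h1 | h1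
  · exact absurd h1 h
  · rw [mem_interval, adj_dist hadj.symm] at h1
    omega

include hG in
lemma cone_of_dist {b w z : X} (hadj : G.Adj b w) (h : G.dist b z = G.dist w z + 1) :
    z ∈ cone G b w := by
  by_contra hz
  have := cone_dist' hG hadj hz
  omega

include hG in
lemma block {b w : X} (hadj : G.Adj b w) :
    ∀ N m (g : ℕ → X),
      1 ≤ m →
      m + (∑ i ∈ Finset.range m, G.dist w (g (i + 1))) ≤ N →
      (∀ i, i ≤ m → G.Adj (g i) (g (i + 1))) →
      G.dist (g 0) (g (m + 1)) = m + 1 →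
      g 0 ∈ cone G b w → g (m + 1) ∈ cone G b w →
      (∀ i, 1 ≤ i → i ≤ m → g i ∉ cone G b w) → False := by
  have hc := hG.1
  intro N
  induction N using Nat.strong_induction_on with
  | _ N IH =>
  intro m g hm hN hadjg hdist h0 hend hint
  have hcd := chain_dist hc (g := g) (n := m + 1) (fun i hi => hadjg i (by omega)) hdist
  have hvint : ∀ i, 1 ≤ i → i ≤ m → G.dist w (g i) = G.dist b (g i) + 1 :=
    fun i h1 h2 => cone_dist' hG hadj (hint i h1 h2)
  have hv0 : G.dist b (g 0) = G.dist w (g 0) + 1 := cone_dist hadj h0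
  have hvend : G.dist b (g (m + 1)) = G.dist w (g (m + 1)) + 1 := cone_dist hadj hend
  have hstart : G.dist w (g 1) = G.dist w (g 0) + 1 := by
    have c1 := adj_dist_cases hG (hadjg 0 (by omega)) (u := w)
    have c2 := adj_dist_cases hG (hadjg 0 (by omega)) (u := b)
    simp only [Nat.zero_add] at c1 c2
    have := hvint 1 le_rfl hm
    omega
  have hendv : G.dist w (g m) = G.dist w (g (m + 1)) + 1 := by
    have c1 := adj_dist_cases hG (hadjg m le_rfl) (u := w)
    have c2 := adj_dist_cases hG (hadjg m le_rfl) (u := b)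
    have := hvint m hm le_rfl
    omega
  -- pick an interior index of maximal distance to w
  obtain ⟨istar, hiT, hmax⟩ :=
    (Finset.Icc 1 m).exists_max_image (fun i => G.dist w (g i))
      ⟨1, Finset.mem_Icc.mpr ⟨le_rfl, hm⟩⟩
  rw [Finset.mem_Icc] at hiT
  have hmax' : ∀ j, 1 ≤ j → j ≤ m → G.dist w (g j) ≤ G.dist w (g istar) :=
    fun j h1 h2 => hmax j (Finset.mem_Icc.mpr ⟨h1, h2⟩)
  obtain ⟨ip, rfl⟩ : ∃ ip, istar = ip + 1 := ⟨istar - 1, by omega⟩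
  obtain ⟨hi1, him⟩ := hiT
  have hL : G.dist w (g ip) + 1 = G.dist w (g (ip + 1)) := by
    rcases Nat.eq_zero_or_pos ip with h | h
    · rw [h]; simp only [Nat.zero_add]; omega
    · have hle := hmax' ip h (by omega)
      have c1 := adj_dist_cases hG (hadjg ip (by omega)) (u := w)
      omega
  have hR : G.dist w (g (ip + 1 + 1)) + 1 = G.dist w (g (ip + 1)) := by
    rcases Nat.eq_or_lt_of_le him with h | h
    · rw [h]
      omega
    · have hle := hmax' (ip + 1 + 1) (by omega) (by omega)
      have c1 := adj_dist_cases hG (hadjg (ip + 1) (by omega)) (u := w)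
      omega
  -- the quadrangle vertex t
  have hne : g ip ≠ g (ip + 1 + 1) := by
    have h2 := hcd ip (ip + 1 + 1) (by omega) (by omega)
    intro h
    rw [h, SimpleGraph.dist_self] at h2
    omega
  obtain ⟨t, htx, hty, htd⟩ := quad hG (u := w) (hadjg ip (by omega)).symm
      (hadjg (ip + 1) (by omega)) hne (by omega) (by omega)
  -- the modified chain g'
  set g' : ℕ → X := Function.update g (ip + 1) t with hg'
  have hg'eq : ∀ i, i ≠ ip + 1 → g' i = g i := fun i hi => Function.update_of_ne hi _ _
  have hg'star : g' (ip + 1) = t := Function.update_self _ _ _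
  have hadj' : ∀ i, i ≤ m → G.Adj (g' i) (g' (i + 1)) := by
    intro i hi
    rcases eq_or_ne i (ip + 1) with rfl | hne1
    · rw [hg'star, hg'eq (ip + 1 + 1) (by omega)]
      exact hty.symm
    · rcases eq_or_ne (i + 1) (ip + 1) with h2 | h2
      · have h3 : i = ip := by omega
        rw [hg'eq i hne1, h2, hg'star, h3]
        exact htx
      · rw [hg'eq i hne1, hg'eq (i + 1) h2]
        exact hadjg i hi
  have hd' : G.dist (g' 0) (g' (m + 1)) = m + 1 := by
    rw [hg'eq 0 (by omega), hg'eq (m + 1) (by omega)]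
    exact hdist
  have hcd' := chain_dist hc (g := g') (n := m + 1) (fun i hi => hadj' i (by omega)) hd'
  rcases Nat.eq_or_lt_of_le hm with hm1 | hm2
  · -- base case m = 1, so ip = 0
    have hip0 : ip = 0 := by omega
    have hmeq : m = 1 := by omega
    subst hip0
    subst hmeq
    simp only [Nat.zero_add] at htx hty htd hR hL
    have d01 : G.dist (g 0) (g 1) = 1 := by
      have := hcd 0 1 (by omega) (by omega); simpa using this
    have d12 := hcd 1 (1 + 1) (by omega) (by omega)
    have d02 := hcd 0 (1 + 1) (by omega) (by omega)
    have hb1 : G.dist w (g 1) = G.dist b (g 1) + 1 := hvint 1 le_rfl le_rfl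
    have hvend' : G.dist b (g (1 + 1)) = G.dist w (g (1 + 1)) + 1 := hvend
    have dt0 : G.dist (g 0) t = 1 := adj_dist htx
    have dt2 : G.dist (g (1 + 1)) t = 1 := adj_dist hty
    have hbt : G.dist b t = G.dist w t + 1 := by
      have c1 := adj_dist_cases hG htx (u := b)
      have c2 := adj_dist_cases hG htx (u := w)
      have t1 := dtri hc b w t
      have t2 := dtri hc w b t
      rw [adj_dist hadj] at t1
      rw [adj_dist hadj.symm] at t2
      omega
    obtain ⟨mm, _, huniq⟩ := med_exists hG (g 0) (g (1 + 1)) b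
    have cm1 := dcomm (G := G) (g (1 + 1)) (g 1)
    have cm2 := dcomm (G := G) (g 1) b
    have cm3 := dcomm (G := G) (g (1 + 1)) b
    have cm4 := dcomm (G := G) (g 1) (g 0)
    have cm5 := dcomm (G := G) b (g 0)
    have cm6 := dcomm (G := G) t (g (1 + 1))
    have cm7 := dcomm (G := G) t b
    have cm8 := dcomm (G := G) t (g 0)
    have hmem1 : g 1 ∈ interval G (g 0) (g (1 + 1)) ∧ g 1 ∈ interval G (g (1 + 1)) b ∧
        g 1 ∈ interval G b (g 0) := by
      refine ⟨?_, ?_, ?_⟩ <;> rw [mem_interval] <;> omega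
    have hmemt : t ∈ interval G (g 0) (g (1 + 1)) ∧ t ∈ interval G (g (1 + 1)) b ∧
        t ∈ interval G b (g 0) := by
      refine ⟨?_, ?_, ?_⟩ <;> rw [mem_interval] <;> omega
    have e2 := huniq (g 1) hmem1
    have e3 := huniq t hmemt
    have e4 : g 1 = t := by rw [e2, ← e3]
    rw [e4] at hL
    omega
  · -- m ≥ 2
    by_cases htW : t ∈ cone G b w
    · by_cases hsplit : ip + 1 + 1 ≤ m
      · -- use the right part
        set m2 := m - (ip + 1) with hm2'
        have h1m2 : 1 ≤ m2 := by omega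
        have hsum : (m2 + ∑ i ∈ Finset.range m2, G.dist w (g' (ip + 1 + (i + 1)))) ≤ N - 1 := by
          have hsub : ∀ i ∈ Finset.range m2, G.dist w (g' (ip + 1 + (i + 1)))
              = G.dist w (g (ip + 1 + i + 1)) := by
            intro i hi
            rw [show ip + 1 + (i + 1) = ip + 1 + i + 1 by omega, hg'eq _ (by omega)]
          rw [Finset.sum_congr rfl hsub]
          have heq2 : (∑ i ∈ Finset.range m2, G.dist w (g (ip + 1 + i + 1)))
              = ∑ i ∈ Finset.Ico (ip + 1) m, G.dist w (g (i + 1)) := by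
            rw [Finset.sum_Ico_eq_sum_range, hm2']
          rw [heq2]
          have hle2 : (∑ i ∈ Finset.Ico (ip + 1) m, G.dist w (g (i + 1)))
              ≤ ∑ i ∈ Finset.range m, G.dist w (g (i + 1)) := by
            apply Finset.sum_le_sum_of_subset
            intro i hi
            rw [Finset.mem_Ico] at hi
            exact Finset.mem_range.mpr (by omega)
          omega
        refine IH (N - 1) (by omega) m2 (fun k => g' (ip + 1 + k)) h1m2 hsum
            (fun i hi => ?_) ?_ ?_ ?_ (fun i hi1 hi2 => ?_)
        · show G.Adj (g' (ip + 1 + i)) (g' (ip + 1 + (i + 1)))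
          rw [show ip + 1 + (i + 1) = (ip + 1 + i) + 1 by omega]
          exact hadj' (ip + 1 + i) (by omega)
        · show G.dist (g' (ip + 1 + 0)) (g' (ip + 1 + (m2 + 1))) = m2 + 1
          have h5 := hcd' (ip + 1) (m + 1) (by omega) (by omega)
          rw [show ip + 1 + 0 = ip + 1 by omega, show ip + 1 + (m2 + 1) = m + 1 by omega]
          omega
        · show g' (ip + 1 + 0) ∈ cone G b w
          rw [show ip + 1 + 0 = ip + 1 by omega, hg'star]
          exact htW
        · show g' (ip + 1 + (m2 + 1)) ∈ cone G b w
          rw [show ip + 1 + (m2 + 1) = m + 1 by omega, hg'eq _ (by omega)]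
          exact hend
        · show g' (ip + 1 + i) ∉ cone G b w
          rw [hg'eq _ (by omega)]
          exact hint (ip + 1 + i) (by omega) (by omega)
      · -- ip + 1 = m : use the left part, ending at t
        have hism : ip + 1 = m := by omega
        set m3 := m - 1 with hm3'
        have h1m3 : 1 ≤ m3 := by omega
        have hsum : (m3 + ∑ i ∈ Finset.range m3, G.dist w (g' (i + 1))) ≤ N - 1 := by
          have hsub : ∀ i ∈ Finset.range m3, G.dist w (g' (i + 1)) = G.dist w (g (i + 1)) := by
            intro i hi
            rw [Finset.mem_range] at hi
            rw [hg'eq _ (by omega)]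
          rw [Finset.sum_congr rfl hsub]
          have hle2 : (∑ i ∈ Finset.range m3, G.dist w (g (i + 1)))
              ≤ ∑ i ∈ Finset.range m, G.dist w (g (i + 1)) := by
            apply Finset.sum_le_sum_of_subset
            intro i hi
            rw [Finset.mem_range] at hi ⊢
            omega
          omega
        refine IH (N - 1) (by omega) m3 g' h1m3 hsum (fun i hi => hadj' i (by omega))
            ?_ ?_ ?_ (fun i hi1 hi2 => ?_)
        · have h5 := hcd' 0 m (by omega) (by omega)
          rw [show m3 + 1 = m by omega]
          omega
        · rw [hg'eq 0 (by omega)]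
          exact h0
        · rw [show m3 + 1 = m by omega, ← hism, hg'star]
          exact htW
        · rw [hg'eq _ (by omega)]
          exact hint i hi1 (by omega)
    · -- replace g (ip+1) by t and recurse
      have hsum : (m + ∑ i ∈ Finset.range m, G.dist w (g' (i + 1))) ≤ N - 1 := by
        have hmem : ip ∈ Finset.range m := Finset.mem_range.mpr (by omega)
        have key : (∑ i ∈ Finset.range m, G.dist w (g' (i + 1)))
              + G.dist w (g (ip + 1))
            = (∑ i ∈ Finset.range m, G.dist w (g (i + 1))) + G.dist w t := by
          rw [← Finset.sum_erase_add _ _ hmem,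
              ← Finset.sum_erase_add _ (fun i => G.dist w (g (i + 1))) hmem]
          have hcongr : ∀ i ∈ (Finset.range m).erase ip,
              G.dist w (g' (i + 1)) = G.dist w (g (i + 1)) := by
            intro i hi
            have := Finset.ne_of_mem_erase hi
            rw [hg'eq _ (by omega)]
          rw [Finset.sum_congr rfl hcongr, hg'star]
          omega
        have hvpos : 1 ≤ G.dist w (g (ip + 1)) := by
          have := hvint (ip + 1) (by omega) (by omega)
          omega
        omega
      exact IH (N - 1) (by omega) m g' hm hsum hadj' hd'
        (by rw [hg'eq 0 (by omega)]; exact h0)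
        (by rw [hg'eq _ (by omega)]; exact hend)
        (fun i hi1 hi2 => by
          rcases eq_or_ne i (ip + 1) with rfl | hne2
          · rw [hg'star]; exact htW
          · rw [hg'eq _ hne2]; exact hint i hi1 hi2)

end block
section conv
variable (hG : IsMedianGraph G)
include hG

/-- Cones over edges are convex (Djoković). -/
lemma cone_convex {b w : X} (hadj : G.Adj b w) : IsConvexSet G (cone G b w) := by
  classical
  have hc := hG.1
  intro x hx y hy z hz
  by_contra hzW
  rw [mem_interval] at hz
  set j := G.dist x z with hj
  set n := G.dist x y with hn
  have hzy : G.dist z y = n - j := by omega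
  have hjn : j ≤ n := by omega
  set g : ℕ → X := fun i => if i ≤ j then geo (G := G) x z i else geo (G := G) z y (i - j)
    with hg
  have hg0 : g 0 = x := by simp [hg]
  have hgj : g j = z := by simp [hg, geo_last hc, hj]
  have hgi1 : ∀ i, i ≤ j → g i = geo (G := G) x z i := fun i hi => by simp [hg, hi]
  have hgi2 : ∀ i, j ≤ i → g i = geo (G := G) z y (i - j) := by
    intro i hi
    rcases Nat.eq_or_lt_of_le hi with h | h
    · rw [← h, hgj, Nat.sub_self, geo_zero]
    · simp [hg, Nat.not_le.mpr h]
  have hgn : g n = y := by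
    rw [hgi2 n hjn, ← hzy, geo_last hc]
  have hadjg : ∀ i, i < n → G.Adj (g i) (g (i + 1)) := by
    intro i hi
    rcases Nat.lt_or_ge i j with h | h
    · rw [hgi1 i (by omega), hgi1 (i + 1) (by omega)]
      exact geo_adj hc (by omega)
    · rw [hgi2 i h, hgi2 (i + 1) (by omega)]
      have e : i + 1 - j = (i - j) + 1 := by omega
      rw [e]
      apply geo_adj hc
      omega
  have hgdist : G.dist (g 0) (g n) = n := by rw [hg0, hgn]
  have hcd := chain_dist hc (g := g) (n := n) hadjg hgdist
  have hj1 : 1 ≤ j := by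
    rcases Nat.eq_zero_or_pos j with h | h
    · exfalso
      have hzx : x = z := deq hc (by omega)
      exact hzW (hzx ▸ hx)
    · exact h
  have hjn' : j < n := by
    rcases Nat.eq_or_lt_of_le hjn with h | h
    · exfalso
      have hzy2 : z = y := deq hc (by omega)
      exact hzW (hzy2 ▸ hy)
    · exact h
  -- the maximal block of non-members around position j
  set P : ℕ → Prop := fun i => g i ∈ cone G b w with hP
  have hP0 : P 0 := by show g 0 ∈ cone G b w; rw [hg0]; exact hx
  set i0 := Nat.findGreatest P j with hi0
  have hPi0 : P i0 := Nat.findGreatest_spec (Nat.zero_le j) hP0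
  have hi0le : i0 ≤ j := Nat.findGreatest_le j
  have hi0max : ∀ i, i0 < i → i ≤ j → ¬ P i :=
    fun i h1 h2 => Nat.findGreatest_is_greatest h1 h2
  have hPj : ¬ P j := by show ¬ (g j ∈ cone G b w); rw [hgj]; exact hzW
  have hi0j : i0 < j := by
    rcases Nat.eq_or_lt_of_le hi0le with h | h
    · exfalso; apply hPj; rw [← h]; exact hPi0
    · exact h
  have hQex : ∃ k, g (j + k) ∈ cone G b w := by
    refine ⟨n - j, ?_⟩
    rw [show j + (n - j) = n by omega, hgn]
    exact hy
  set k0 := Nat.find hQex with hk0'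
  have hQk0 : g (j + k0) ∈ cone G b w := Nat.find_spec hQex
  have hk0min : ∀ k, k < k0 → g (j + k) ∉ cone G b w := fun k hk => Nat.find_min hQex hk
  have hk0le : k0 ≤ n - j := Nat.find_min' hQex (by
    rw [show j + (n - j) = n by omega, hgn]; exact hy)
  have hk01 : 1 ≤ k0 := by
    rcases Nat.eq_zero_or_pos k0 with h | h
    · exfalso
      have := hQk0
      rw [h, Nat.add_zero, hgj] at this
      exact hzW this
    · exact h
  set i1 := j + k0 with hi1
  set m := i1 - i0 - 1 with hmdef
  have hm : 1 ≤ m := by omega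
  refine block hG hadj (m + ∑ i ∈ Finset.range m, G.dist w (g (i0 + (i + 1)))) m
      (fun tt => g (i0 + tt)) hm le_rfl (fun i hi => ?_) ?_ ?_ ?_ (fun i hi1 hi2 => ?_)
  · show G.Adj (g (i0 + i)) (g (i0 + (i + 1)))
    rw [show i0 + (i + 1) = (i0 + i) + 1 by omega]
    exact hadjg (i0 + i) (by omega)
  · show G.dist (g (i0 + 0)) (g (i0 + (m + 1))) = m + 1
    rw [show i0 + 0 = i0 by omega, show i0 + (m + 1) = i1 by omega]
    have := hcd i0 i1 (by omega) (by omega)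
    omega
  · show g (i0 + 0) ∈ cone G b w
    rw [show i0 + 0 = i0 by omega]
    exact hPi0
  · show g (i0 + (m + 1)) ∈ cone G b w
    rw [show i0 + (m + 1) = j + k0 by omega]
    exact hQk0
  · show g (i0 + i) ∉ cone G b w
    rcases le_or_gt (i0 + i) j with h | h
    · exact hi0max (i0 + i) (by omega) h
    · rw [show i0 + i = j + (i0 + i - j) by omega]
      exact hk0min (i0 + i - j) (by omega)

lemma cone_compl {b w : X} (hadj : G.Adj b w) : (cone G b w)ᶜ = cone G w b := by
  ext z
  simp only [Set.mem_compl_iff, mem_cone]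
  constructor
  · intro h
    rcases edge_or hG hadj.symm (z := z) with h1 | h1
    · exact absurd h1 h
    · exact h1
  · intro h hcon
    exact edge_not_both (G := G) hadj.symm ⟨hcon, h⟩

lemma cone_halfspace {b w : X} (hadj : G.Adj b w) : IsHalfspace G (cone G b w) := by
  refine ⟨cone_convex hG hadj, ?_⟩
  rw [cone_compl hG hadj]
  exact cone_convex hG hadj.symm

omit hG in
lemma self_mem_cone {b w : X} : w ∈ cone G b w := by
  rw [mem_cone, mem_interval, SimpleGraph.dist_self]
  omega

include hG in
lemma base_notMem_cone {b w : X} (hbw : b ≠ w) : b ∉ cone G b w := by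
  rw [mem_cone, mem_interval, SimpleGraph.dist_self]
  intro h
  exact hbw (deq hG.1 (by omega)).symm

/-- The gate property: if `a ∈ K`, `b ∉ K` are adjacent and `K` is convex,
then `a` lies between `b` and every point of `K`. -/
lemma gate {K : Set X} (hK : IsConvexSet G K) {a b : X} (ha : a ∈ K) (hb : b ∉ K)
    (hadj : G.Adj b a) {k : X} (hk : k ∈ K) : a ∈ interval G b k := by
  obtain ⟨mm, ⟨h1, h2, h3⟩, _⟩ := med_exists hG b a k
  have hmK : mm ∈ K := hK a ha k hk h2
  rcases interval_adj hG.1 hadj h1 with h | h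
  · rw [h] at hmK; exact absurd hmK hb
  · rw [← h]; exact interval_comm h3

/-- A halfspace is determined by any of its crossing edges. -/
lemma halfspace_eq_cone {K : Set X} (hK : IsHalfspace G K) {a b : X} (ha : a ∈ K)
    (hb : b ∉ K) (hadj : G.Adj b a) : K = cone G b a := by
  ext z
  rw [mem_cone]
  constructor
  · intro hz
    exact gate hG hK.1 ha hb hadj hz
  · intro hz
    by_contra hzK
    have h2 : b ∈ interval G a z := gate hG hK.2 hb (fun h => h ha) hadj.symm hzK
    rw [mem_interval, adj_dist hadj] at hz
    rw [mem_interval, adj_dist hadj.symm] at h2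
    omega

end conv
section halfspaces
variable (hG : IsMedianGraph G)

lemma halfspace_compl {H : Set X} (h : IsHalfspace G H) : IsHalfspace G Hᶜ :=
  ⟨h.2, by rw [compl_compl]; exact h.1⟩

lemma compl_ssubset {A B : Set X} (h : A ⊂ B) : Bᶜ ⊂ Aᶜ :=
  ⟨Set.compl_subset_compl.mpr h.subset,
   fun hc => absurd (Set.compl_subset_compl.mp hc) h.not_subset⟩

lemma vBoundary_compl {A : Set X} : vBoundary G Aᶜ = vBoundary G A := by
  ext x
  simp only [vBoundary, Set.mem_setOf_eq, Set.mem_compl_iff, not_not]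
  constructor <;> rintro ⟨y, hadj, h⟩ <;> exact ⟨y, hadj, h.symm⟩

lemma successor_compl {H K : Set X} (h : Successor G K H) : Successor G Hᶜ Kᶜ := by
  obtain ⟨h1, h2, h3, h4⟩ := h
  refine ⟨halfspace_compl h2, halfspace_compl h1, compl_ssubset h3, ?_⟩
  rintro ⟨L, hL, hl1, hl2⟩
  apply h4
  refine ⟨Lᶜ, halfspace_compl hL, ?_, ?_⟩
  · have := compl_ssubset hl2
    rwa [compl_compl] at this
  · have := compl_ssubset hl1
    rwa [compl_compl] at this

include hG

/-- Both sides of the boundary of a halfspace are convex. -/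
lemma bdry_convex {K : Set X} (hK : IsHalfspace G K) :
    IsConvexSet G {a | a ∈ K ∧ ∃ b', G.Adj a b' ∧ b' ∉ K} := by
  have hc := hG.1
  rintro x ⟨hxK, x', hxadj, hx'⟩ y ⟨hyK, y', hyadj, hy'⟩ z hz
  have hzK : z ∈ K := hK.1 x hxK y hyK hz
  obtain ⟨mm, ⟨h1, h2, h3⟩, _⟩ := med_exists hG x' z y'
  have hmK : mm ∉ K := hK.2 y' hy' x' hx' h3
  have g1 := gate hG hK.1 hxK hx' hxadj.symm hzK
  have g2 := gate hG hK.1 hyK hy' hyadj.symm hzK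
  have g3 := gate hG hK.1 hxK hx' hxadj.symm hyK
  rw [mem_interval] at h1 h2 h3 g1 g2 g3 hz
  have t2 := dtri hc x' y' y
  have t3 := dtri hc x' mm y'
  have hyy' : G.dist y y' = 1 := adj_dist hyadj
  have hy'y : G.dist y' y = 1 := adj_dist hyadj.symm
  have hx'x : G.dist x' x = 1 := adj_dist hxadj.symm
  have cm1 := dcomm (G := G) z y
  have cm2 := dcomm (G := G) y' z
  have cm3 := dcomm (G := G) z mm
  have cm4 := dcomm (G := G) y' mm
  have hd1 : G.dist z mm = 1 := by
    have hne : G.dist z mm ≠ 0 := fun h0 => hmK ((deq hc h0) ▸ hzK)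
    omega
  exact ⟨hzK, mm, dist_one_adj hd1, hmK⟩

lemma exists_cross_aux {A : Set X} (y : X) (hy : y ∉ A) :
    ∀ n x, G.dist x y = n → x ∈ A →
    ∃ p q, G.Adj p q ∧ p ∈ A ∧ q ∉ A ∧ p ∈ interval G x y ∧ q ∈ interval G x y := by
  have hc := hG.1
  intro n
  induction n using Nat.strong_induction_on with
  | _ n IH =>
  intro x hn hx
  have hd : G.dist x y ≠ 0 := fun h0 => hy ((deq hc h0) ▸ hx)
  obtain ⟨n', hn'⟩ : ∃ n', G.dist x y = n' + 1 := ⟨G.dist x y - 1, by omega⟩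
  obtain ⟨z, hz1, hz2⟩ := exists_step hc hn'
  have hzI : z ∈ interval G x y := by rw [mem_interval, adj_dist hz1]; omega
  by_cases hzA : z ∈ A
  · obtain ⟨p, q, e1, e2, e3, e4, e5⟩ := IH n' (by omega) z hz2 hzA
    exact ⟨p, q, e1, e2, e3, (chain2 hc hzI e4).1, (chain2 hc hzI e5).1⟩
  · exact ⟨x, z, hz1, hx, hzA, left_mem_interval, hzI⟩

lemma exists_cross {A : Set X} {x y : X} (hx : x ∈ A) (hy : y ∉ A) :
    ∃ p q, G.Adj p q ∧ p ∈ A ∧ q ∉ A ∧ p ∈ interval G x y ∧ q ∈ interval G x y :=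
  exists_cross_aux hG y hy _ x rfl hx

/-- Transverse halfspaces have crossing edges on the boundary of each other. -/
lemma nonnested_vbdry {H K : Set X} (hH : IsHalfspace G H) (hK : IsHalfspace G K)
    (hnn : NonNested H K) :
    ∃ p q, G.Adj p q ∧ p ∈ K ∧ q ∉ K ∧ p ∈ vBoundary G H := by
  obtain ⟨⟨a1, ha1⟩, ⟨a2, ha2⟩, ⟨a3, ha3⟩, ⟨a4, ha4⟩⟩ := hnn
  obtain ⟨p1, q1, e1, e2, e3, e4, e5⟩ := exists_cross hG (A := K) ha1.2 ha2.2
  obtain ⟨p2, q2, f1, f2, f3, f4, f5⟩ := exists_cross hG (A := K) ha3.2 ha4.2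
  have hp1 : p1 ∈ {a | a ∈ K ∧ ∃ b', G.Adj a b' ∧ b' ∉ K} ∧ p1 ∈ H :=
    ⟨⟨e2, q1, e1, e3⟩, hH.1 a1 ha1.1 a2 ha2.1 e4⟩
  have hp2 : p2 ∈ {a | a ∈ K ∧ ∃ b', G.Adj a b' ∧ b' ∉ K} ∧ p2 ∉ H := by
    refine ⟨⟨f2, q2, f1, f3⟩, ?_⟩
    have := hH.2 a3 ha3.1 a4 ha4.1 f4
    exact this
  obtain ⟨p, q, g1, g2, g3, g4, g5⟩ := exists_cross hG (A := H) hp1.2 hp2.2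
  have hpB := bdry_convex hG hK p1 hp1.1 p2 hp2.1 g4
  obtain ⟨hpK, r, hradj, hrK⟩ := hpB
  exact ⟨p, r, hradj, hpK, hrK, ⟨q, g1, Or.inl ⟨g2, g3⟩⟩⟩

/-- If `K ⊊ H` is a successor pair, some crossing edge of `K` touches the
vertex boundary of `H`. -/
lemma succ_vbdry {H K : Set X} (hsucc : Successor G H K) (hKne : K.Nonempty)
    (hHuniv : H ≠ Set.univ) :
    ∃ p q, G.Adj p q ∧ p ∈ K ∧ q ∉ K ∧ (p ∈ vBoundary G H ∨ q ∈ vBoundary G H) := by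
  classical
  obtain ⟨hH, hK, hKH, hnob⟩ := hsucc
  have hc := hG.1
  by_contra hcon
  push_neg at hcon
  have KsubH := hKH.subset
  obtain ⟨h0, hh0H, hh0K⟩ := Set.exists_of_ssubset hKH
  set B' : Set X := {p | p ∉ K ∧ ∃ a, G.Adj p a ∧ a ∈ K} with hB'
  have hB'H : ∀ p, p ∈ B' → p ∈ H := by
    rintro p ⟨hpK, a, hadj, haK⟩
    by_contra hpH
    have d1 : K = cone G p a := halfspace_eq_cone hG hK haK hpK hadj
    have d2 : H = cone G p a := halfspace_eq_cone hG hH (KsubH haK) hpH hadj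
    exact hKH.ne (d1.trans d2.symm)
  obtain ⟨x0, hx0⟩ := hKne
  obtain ⟨pp, qq, u1, u2, u3, _, _⟩ := exists_cross hG (A := K) hx0 hh0K
  have hqqB' : qq ∈ B' := ⟨u3, pp, u1.symm, u2⟩
  obtain ⟨c0, hc0⟩ := (Set.ne_univ_iff_exists_notMem _).mp hHuniv
  have hDne : {d | ∃ p c, p ∈ B' ∧ c ∉ H ∧ G.dist p c = d}.Nonempty :=
    ⟨_, qq, c0, hqqB', hc0, rfl⟩
  set n := sInf {d | ∃ p c, p ∈ B' ∧ c ∉ H ∧ G.dist p c = d} with hn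
  obtain ⟨b0, c, hb0B', hcH, hbc⟩ := Nat.sInf_mem hDne
  have hmin : ∀ p c', p ∈ B' → c' ∉ H → n ≤ G.dist p c' :=
    fun p c' h1 h2 => Nat.sInf_le ⟨p, c', h1, h2, rfl⟩
  obtain ⟨hb0K, a, hadj, haK⟩ := hb0B'
  have hb0B'' : b0 ∈ B' := ⟨hb0K, a, hadj, haK⟩
  have hb0H : b0 ∈ H := hB'H b0 hb0B''
  have hn1 : 1 ≤ n := by
    have : b0 ≠ c := fun h => hcH (h ▸ hb0H)
    have := dpos hc this
    omega
  have hn2 : 2 ≤ n := by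
    rcases Nat.eq_or_lt_of_le hn1 with h | h
    · exfalso
      have hadjc : G.Adj b0 c := dist_one_adj (by omega)
      have hb0vb : b0 ∈ vBoundary G H := ⟨c, hadjc, Or.inl ⟨hb0H, hcH⟩⟩
      exact (hcon a b0 hadj.symm haK hb0K).2 hb0vb
    · exact h
  obtain ⟨w1, hw1adj, hw1c⟩ := exists_step hc (show G.dist b0 c = (n - 1) + 1 by omega)
  have hcK : c ∉ K := fun h => hcH (KsubH h)
  have hw1K : w1 ∉ K := by
    intro hw1K
    have hg := gate hG hK.1 haK hb0K hadj hw1K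
    rw [mem_interval, adj_dist hw1adj, adj_dist hadj] at hg
    have haw1 : a = w1 := deq hc (by omega)
    obtain ⟨p2, q2, v1, v2, v3, v4, v5⟩ := exists_cross hG (A := K) haK hcK
    have hq2B' : q2 ∈ B' := ⟨v3, p2, v1.symm, v2⟩
    have hd : G.dist a q2 ≠ 0 := fun h0 => v3 ((deq hc h0) ▸ haK)
    rw [mem_interval] at v5
    have hac : G.dist a c = n - 1 := by rw [haw1]; exact hw1c
    have := hmin q2 c hq2B' hcH
    omega
  set M := cone G w1 b0 with hM
  have hbM : b0 ∈ M := self_mem_cone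
  have hw1M : w1 ∉ M := base_notMem_cone hG hw1adj.ne'
  have hw1H : w1 ∈ H := by
    by_contra hw1H
    have hb0vb : b0 ∈ vBoundary G H := ⟨w1, hw1adj, Or.inl ⟨hb0H, hw1H⟩⟩
    exact (hcon a b0 hadj.symm haK hb0K).2 hb0vb
  have hMH : M ⊆ H := by
    intro z hzM
    by_contra hzH
    obtain ⟨mm, ⟨m1, m2, m3⟩, _⟩ := med_exists hG b0 c z
    have hmmH : mm ∉ H := hH.2 c hcH z hzH m2
    have hge : n ≤ G.dist b0 mm := hmin b0 mm hb0B'' hmmH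
    rw [mem_interval] at m1 m2 m3
    have hmc : mm = c := deq hc (by omega)
    rw [hmc] at m3
    have hzM' := cone_dist hw1adj.symm hzM
    have t1 := dtri hc w1 c z
    have cmA := dcomm (G := G) z c
    have cmB := dcomm (G := G) c b0
    have cmC := dcomm (G := G) z b0
    omega
  have hKM : K ⊆ M := by
    intro k hkK
    rcases edge_or hG hw1adj (z := k) with h1 | h1
    · exact h1
    · exfalso
      have hg := gate hG hK.1 haK hb0K hadj hkK
      rw [mem_interval, adj_dist hw1adj] at h1
      rw [mem_interval, adj_dist hadj] at hg
      have hw1a2 : G.dist w1 a = 2 := by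
        have hne0 : G.dist w1 a ≠ 0 := fun h0 => hw1K ((deq hc h0) ▸ haK)
        have hne1 : G.dist w1 a ≠ 1 := by
          intro h1'
          have : w1 ∈ B' := ⟨hw1K, a, dist_one_adj h1', haK⟩
          have := hmin w1 c this hcH
          omega
        have t1 := dtri hc w1 b0 a
        rw [adj_dist hw1adj.symm, adj_dist hadj] at t1
        omega
      obtain ⟨mm2, ⟨w1', w2', w3'⟩, _⟩ := med_exists hG w1 a k
      have hm2K : mm2 ∈ K := hK.1 a haK k hkK w2'
      rw [mem_interval] at w1' w2' w3'
      have hne0 : G.dist w1 mm2 ≠ 0 := fun h0 => hw1K ((deq hc h0) ▸ hm2K)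
      have hne1 : G.dist w1 mm2 ≠ 1 := by
        intro h1'
        have : w1 ∈ B' := ⟨hw1K, mm2, dist_one_adj h1', hm2K⟩
        have := hmin w1 c this hcH
        omega
      have hmm2a : mm2 = a := deq hc (by omega)
      rw [hmm2a] at w3'
      have cmA := dcomm (G := G) k a
      have cmB := dcomm (G := G) a w1
      have cmC := dcomm (G := G) k w1
      omega
  apply hnob
  refine ⟨M, cone_halfspace hG hw1adj.symm, ⟨hKM, fun hs => hb0K (hs hbM)⟩,
    ⟨hMH, fun hs => hw1M (hs hw1H)⟩⟩

end halfspaces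

section adjacency
variable (hG : IsMedianGraph G)
include hG

lemma succ_of_shared_bdry {A C : Set X} (hA : IsHalfspace G A) (hC : IsHalfspace G C)
    (hAC : A ⊂ C) {x : X} (hxA : x ∈ vBoundary G A) (hxC : x ∈ vBoundary G C) :
    Successor G C A := by
  refine ⟨hC, hA, hAC, ?_⟩
  rintro ⟨L, hL, hAL, hLC⟩
  obtain ⟨a', hadja, hcasea⟩ := hxA
  obtain ⟨c', hadjc, hcasec⟩ := hxC
  by_cases hxL : x ∈ L
  · have hxC' : x ∈ C := hLC.subset hxL
    rcases hcasec with h | h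
    · have hc'L : c' ∉ L := fun hh => h.2 (hLC.subset hh)
      have d1 : L = cone G c' x := halfspace_eq_cone hG hL hxL hc'L hadjc.symm
      have d2 : C = cone G c' x := halfspace_eq_cone hG hC hxC' h.2 hadjc.symm
      exact hLC.ne (d1.trans d2.symm)
    · exact absurd hxC' h.1
  · have hxA' : x ∉ A := fun hh => hxL (hAL.subset hh)
    rcases hcasea with h | h
    · exact absurd h.1 hxA'
    · have ha'L : a' ∈ L := hAL.subset h.2
      have d1 : L = cone G x a' := halfspace_eq_cone hG hL ha'L hxL hadja
      have d2 : A = cone G x a' := halfspace_eq_cone hG hA h.2 hxA' hadja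
      exact hAL.ne (d2.trans d1.symm)

lemma hypadj_of_shared {A B : Set X} (hA : IsHalfspace G A) (hB : IsHalfspace G B)
    {x : X} (hxA : x ∈ vBoundary G A) (hxB : x ∈ vBoundary G B) :
    HypAdj G A B := by
  have hxBc : x ∈ vBoundary G Bᶜ := by rw [vBoundary_compl]; exact hxB
  by_cases h1 : (A ∩ B).Nonempty
  · by_cases h2 : (A ∩ Bᶜ).Nonempty
    · by_cases h3 : (Aᶜ ∩ B).Nonempty
      · by_cases h4 : (Aᶜ ∩ Bᶜ).Nonempty
        · exact Or.inr (Or.inr (Or.inl ⟨h1, h2, h3, h4⟩))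
        · have hsub : Bᶜ ⊆ A := fun t ht => by
            by_contra hta; exact h4 ⟨t, hta, ht⟩
          rcases eq_or_ne A Bᶜ with he | hne
          · exact Or.inr (Or.inl he)
          · have hss : Bᶜ ⊂ A := hsub.ssubset_of_ne (fun hh => hne hh.symm)
            have hsucc := succ_of_shared_bdry hG (halfspace_compl hB) hA hss hxBc hxA
            exact Or.inr (Or.inr (Or.inr (Or.inr (Or.inr (Or.inr (Or.inr (Or.inl hsucc)))))))
      · have hsub : B ⊆ A := fun t ht => by
          by_contra hta; exact h3 ⟨t, hta, ht⟩
        rcases eq_or_ne A B with he | hne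
        · exact Or.inl he
        · have hss : B ⊂ A := hsub.ssubset_of_ne (fun hh => hne hh.symm)
          have hsucc := succ_of_shared_bdry hG hB hA hss hxB hxA
          exact Or.inr (Or.inr (Or.inr (Or.inl hsucc)))
    · have hsub : A ⊆ B := fun t ht => by
        by_contra htb; exact h2 ⟨t, ht, htb⟩
      rcases eq_or_ne A B with he | hne
      · exact Or.inl he
      · have hss : A ⊂ B := hsub.ssubset_of_ne hne
        have hsucc := succ_of_shared_bdry hG hA hB hss hxA hxB
        exact Or.inr (Or.inr (Or.inr (Or.inr (Or.inl hsucc))))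
  · have hsub : A ⊆ Bᶜ := fun t ht hb => h1 ⟨t, ht, hb⟩
    rcases eq_or_ne A Bᶜ with he | hne
    · exact Or.inr (Or.inl he)
    · have hss : A ⊂ Bᶜ := hsub.ssubset_of_ne hne
      have hsucc := succ_of_shared_bdry hG hA (halfspace_compl hB) hss hxA hxBc
      exact Or.inr (Or.inr (Or.inr (Or.inr (Or.inr (Or.inr (Or.inr (Or.inr (Or.inl hsucc))))))))

omit hG in
lemma vB_subset {H : Set X} :
    vBoundary G H ⊆ (Prod.fst '' edgeBoundaryIn G H) ∪ (Prod.snd '' edgeBoundaryIn G H) := by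
  rintro x ⟨y, hadj, h | h⟩
  · exact Or.inr ⟨(y, x), ⟨hadj.symm, h.2, h.1⟩, rfl⟩
  · exact Or.inl ⟨(x, y), ⟨hadj, h.1, h.2⟩, rfl⟩

end adjacency

end MedAux

open MedAux in
theorem hyperplane_locfin_tfae (G : SimpleGraph X) (hG : IsMedianGraph G) :
    ((∀ H : Set X, IsHalfspace G H → H ≠ ∅ → H ≠ Set.univ →
        {K : Set X | IsHalfspace G K ∧ K ≠ ∅ ∧ K ≠ Set.univ ∧ K ≠ H ∧ HypAdj G H K}.Finite) ↔
     (∀ H : Set X, IsHalfspace G H → H ≠ ∅ → H ≠ Set.univ →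
        {K : Set X | IsHalfspace G K ∧
          (NonNested H K ∨ Successor G K H ∨ Successor G H K)}.Finite)) ∧
    ((∀ H : Set X, IsHalfspace G H → H ≠ ∅ → H ≠ Set.univ →
        {K : Set X | IsHalfspace G K ∧
          (NonNested H K ∨ Successor G K H ∨ Successor G H K)}.Finite) ↔
     ((∀ v : X, (G.neighborSet v).Finite) ∧
      ∀ H : Set X, IsHalfspace G H → H ≠ ∅ → H ≠ Set.univ →
        (edgeBoundaryIn G H).Finite)) := by
  classical
  have hc := hG.1
  -- (i) → (ii)
  have dir1 : (∀ H : Set X, IsHalfspace G H → H ≠ ∅ → H ≠ Set.univ →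
        {K : Set X | IsHalfspace G K ∧ K ≠ ∅ ∧ K ≠ Set.univ ∧ K ≠ H ∧ HypAdj G H K}.Finite) →
      (∀ H : Set X, IsHalfspace G H → H ≠ ∅ → H ≠ Set.univ →
        {K : Set X | IsHalfspace G K ∧
          (NonNested H K ∨ Successor G K H ∨ Successor G H K)}.Finite) := by
    intro hi H hH hne hnu
    refine ((hi H hH hne hnu).union
      ((Set.finite_singleton (∅ : Set X)).union (Set.finite_singleton Set.univ))).subset ?_
    rintro K ⟨hK, hrel⟩
    by_cases hKe : K = ∅
    · exact Or.inr (Or.inl hKe)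
    by_cases hKu : K = Set.univ
    · exact Or.inr (Or.inr hKu)
    refine Or.inl ⟨hK, hKe, hKu, ?_, ?_⟩
    · rcases hrel with h | h | h
      · rintro rfl
        obtain ⟨t, ht1, ht2⟩ := h.2.1
        exact ht2 ht1
      · exact (h.2.2.1.ne).symm
      · exact h.2.2.1.ne
    · rcases hrel with h | h | h
      · exact Or.inr (Or.inr (Or.inl h))
      · exact Or.inr (Or.inr (Or.inr (Or.inr (Or.inl h))))
      · exact Or.inr (Or.inr (Or.inr (Or.inl h)))
  -- (ii) → (i)
  have dir2 : (∀ H : Set X, IsHalfspace G H → H ≠ ∅ → H ≠ Set.univ →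
        {K : Set X | IsHalfspace G K ∧
          (NonNested H K ∨ Successor G K H ∨ Successor G H K)}.Finite) →
      (∀ H : Set X, IsHalfspace G H → H ≠ ∅ → H ≠ Set.univ →
        {K : Set X | IsHalfspace G K ∧ K ≠ ∅ ∧ K ≠ Set.univ ∧ K ≠ H ∧ HypAdj G H K}.Finite) := by
    intro hii H hH hne hnu
    have hHc := halfspace_compl (G := G) hH
    have hnec : Hᶜ ≠ ∅ := fun h => hnu (by rwa [Set.compl_empty_iff] at h)
    have hnuc : Hᶜ ≠ Set.univ := fun h => hne (by rwa [Set.compl_univ_iff] at h)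
    have F1 := hii H hH hne hnu
    have F2 := hii Hᶜ hHc hnec hnuc
    have hcinj : Function.Injective (fun K : Set X => Kᶜ) := fun a b h => by
      simpa using congrArg compl h
    refine ((Set.finite_singleton Hᶜ).union (F1.union (F2.union
      ((F1.preimage hcinj.injOn).union (F2.preimage hcinj.injOn))))).subset ?_
    rintro K ⟨hK, hKe, hKu, hKH, hadj⟩
    rcases hadj with h|h|h|h|h|h|h|h|h|h|h
    · exact absurd h.symm hKH
    · exact Or.inl (Set.mem_singleton_iff.mpr (by rw [h, compl_compl]))
    · exact Or.inr (Or.inl ⟨hK, Or.inl h⟩)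
    · exact Or.inr (Or.inl ⟨hK, Or.inr (Or.inr h)⟩)
    · exact Or.inr (Or.inl ⟨hK, Or.inr (Or.inl h)⟩)
    · exact Or.inr (Or.inr (Or.inl ⟨hK, Or.inr (Or.inr h)⟩))
    · exact Or.inr (Or.inr (Or.inl ⟨hK, Or.inr (Or.inl h)⟩))
    · exact Or.inr (Or.inr (Or.inr (Or.inl ⟨halfspace_compl hK, Or.inr (Or.inr h)⟩)))
    · exact Or.inr (Or.inr (Or.inr (Or.inl ⟨halfspace_compl hK, Or.inr (Or.inl h)⟩)))
    · exact Or.inr (Or.inr (Or.inr (Or.inr ⟨halfspace_compl hK, Or.inr (Or.inr h)⟩)))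
    · exact Or.inr (Or.inr (Or.inr (Or.inr ⟨halfspace_compl hK, Or.inr (Or.inl h)⟩)))
  refine ⟨⟨dir1, dir2⟩, ?_, ?_⟩
  · -- (ii) → (iii)
    intro hii
    have hi := dir2 hii
    have hlf : ∀ v : X, (G.neighborSet v).Finite := by
      intro v
      by_contra hinf
      have hinf' : (G.neighborSet v).Infinite := hinf
      obtain ⟨u0, hu0⟩ := hinf'.nonempty
      rw [SimpleGraph.mem_neighborSet] at hu0
      have hu0H : u0 ∈ cone G v u0 := self_mem_cone
      have hvH : v ∉ cone G v u0 := base_notMem_cone hG hu0.ne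
      have hHhs := cone_halfspace hG hu0
      have hvb : v ∈ vBoundary G (cone G v u0) := ⟨u0, hu0, Or.inr ⟨hvH, hu0H⟩⟩
      have S := hi (cone G v u0) hHhs (Set.Nonempty.ne_empty ⟨u0, hu0H⟩)
        (fun h => hvH (h.symm ▸ Set.mem_univ v))
      apply hinf
      apply Set.Finite.of_finite_image (f := fun u => cone G v u)
      · apply (S.union (Set.finite_singleton (cone G v u0))).subset
        rintro K' ⟨u, hu, rfl⟩
        rw [SimpleGraph.mem_neighborSet] at hu
        show cone G v u ∈ _
        by_cases hKH : cone G v u = cone G v u0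
        · exact Or.inr hKH
        · refine Or.inl ⟨cone_halfspace hG hu, Set.Nonempty.ne_empty ⟨u, self_mem_cone⟩,
            (fun h2 => (base_notMem_cone hG hu.ne) (h2.symm ▸ Set.mem_univ v)), hKH, ?_⟩
          exact hypadj_of_shared hG hHhs (cone_halfspace hG hu) hvb
            ⟨u, hu, Or.inr ⟨base_notMem_cone hG hu.ne, self_mem_cone⟩⟩
      · intro u hu u' hu' he
        rw [SimpleGraph.mem_neighborSet] at hu hu'
        have he' : cone G v u = cone G v u' := he
        have h1 : u' ∈ cone G v u := by rw [he']; exact self_mem_cone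
        rw [mem_cone, mem_interval, adj_dist hu, adj_dist hu'] at h1
        exact deq hc (by omega)
    refine ⟨hlf, ?_⟩
    intro H hH hne hnu
    have S := hi H hH hne hnu
    have hVH : {u | u ∈ H ∧ ∃ y, G.Adj u y ∧ y ∉ H}.Finite := by
      apply Set.Finite.of_finite_image
        (f := fun u => {K : Set X | K ∈ {K : Set X | IsHalfspace G K ∧ K ≠ ∅ ∧
          K ≠ Set.univ ∧ K ≠ H ∧ HypAdj G H K} ∧ u ∈ K})
      · apply S.finite_subsets.subset
        rintro T ⟨u, hu, rfl⟩
        intro K hK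
        exact hK.1
      · rintro u hu u' hu' he
        by_contra hne'
        have hd : G.dist u u' ≠ 0 := fun h0 => hne' (deq hc h0)
        obtain ⟨w, hw1, hw2⟩ := exists_step hc
          (show G.dist u u' = (G.dist u u' - 1) + 1 by omega)
        have hKhs := cone_halfspace hG hw1
        have huK : u ∉ cone G u w := base_notMem_cone hG hw1.ne
        have hwK : w ∈ cone G u w := self_mem_cone
        have hu'K : u' ∈ cone G u w := by
          rw [mem_cone, mem_interval, adj_dist hw1]
          omega
        obtain ⟨y, hy1, hy2⟩ := hu.2
        have hKS : cone G u w ∈ {K : Set X | IsHalfspace G K ∧ K ≠ ∅ ∧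
            K ≠ Set.univ ∧ K ≠ H ∧ HypAdj G H K} := by
          refine ⟨hKhs, Set.Nonempty.ne_empty ⟨w, hwK⟩,
            (fun h2 => huK (h2.symm ▸ Set.mem_univ u)),
            (fun hKH => huK (hKH.symm ▸ hu.1)), ?_⟩
          exact hypadj_of_shared hG hH hKhs ⟨y, hy1, Or.inl ⟨hu.1, hy2⟩⟩
            ⟨w, hw1, Or.inr ⟨huK, hwK⟩⟩
        have he' : {K : Set X | K ∈ {K : Set X | IsHalfspace G K ∧ K ≠ ∅ ∧
            K ≠ Set.univ ∧ K ≠ H ∧ HypAdj G H K} ∧ u ∈ K}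
            = {K : Set X | K ∈ {K : Set X | IsHalfspace G K ∧ K ≠ ∅ ∧
            K ≠ Set.univ ∧ K ≠ H ∧ HypAdj G H K} ∧ u' ∈ K} := he
        have h6 : cone G u w ∈ {K : Set X | K ∈ {K : Set X | IsHalfspace G K ∧ K ≠ ∅ ∧
            K ≠ Set.univ ∧ K ≠ H ∧ HypAdj G H K} ∧ u ∈ K} := by
          rw [he']
          exact ⟨hKS, hu'K⟩
        exact huK h6.2
    apply Set.Finite.subset (hVH.biUnion (fun u _ => ((hlf u).image (fun y => (y, u)))))
    rintro ⟨e1, e2⟩ ⟨hadj, he1, he2⟩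
    exact Set.mem_biUnion ⟨he2, e1, hadj.symm, he1⟩ ⟨e1, hadj.symm, rfl⟩
  · -- (iii) → (ii)
    rintro ⟨hlf, hebd⟩
    intro H hH hne hnu
    have hvbfin : (vBoundary G H).Finite :=
      (((hebd H hH hne hnu).image Prod.fst).union
        ((hebd H hH hne hnu).image Prod.snd)).subset vB_subset
    have hEfin : {e : X × X | G.Adj e.1 e.2 ∧
        (e.1 ∈ vBoundary G H ∨ e.2 ∈ vBoundary G H)}.Finite := by
      apply Set.Finite.subset
        ((hvbfin.biUnion (fun x _ => (Set.finite_singleton x).prod (hlf x))).union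
         (hvbfin.biUnion (fun x _ => (hlf x).prod (Set.finite_singleton x))))
      rintro ⟨e1, e2⟩ ⟨hadj, h | h⟩
      · exact Or.inl (Set.mem_biUnion h ⟨rfl, hadj⟩)
      · exact Or.inr (Set.mem_biUnion h ⟨hadj.symm, rfl⟩)
    apply Set.Finite.subset ((hEfin.image (fun e => cone G e.2 e.1)).union
      ((Set.finite_singleton (∅ : Set X)).union (Set.finite_singleton Set.univ)))
    rintro K ⟨hK, hrel⟩
    by_cases hKe : K = ∅
    · exact Or.inr (Or.inl hKe)
    by_cases hKu : K = Set.univ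
    · exact Or.inr (Or.inr hKu)
    have hedge : ∃ p q, G.Adj p q ∧ p ∈ K ∧ q ∉ K ∧
        (p ∈ vBoundary G H ∨ q ∈ vBoundary G H) := by
      rcases hrel with h | h | h
      · obtain ⟨p, q, h1, h2, h3, h4⟩ := nonnested_vbdry hG hH hK h
        exact ⟨p, q, h1, h2, h3, Or.inl h4⟩
      · have h2 := successor_compl (G := G) h
        obtain ⟨p, q, h1, hp, hq, hb⟩ := succ_vbdry hG h2 (Set.nonempty_compl.mpr hKu)
          (fun hcu => hne (by rwa [Set.compl_univ_iff] at hcu))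
        rw [vBoundary_compl] at hb
        exact ⟨q, p, h1.symm, Set.not_notMem.mp hq, hp, hb.symm⟩
      · exact succ_vbdry hG h (Set.nonempty_iff_ne_empty.mpr hKe) hnu
    obtain ⟨p, q, h1, h2, h3, h4⟩ := hedge
    exact Or.inl ⟨(p, q), ⟨h1, h4⟩, (halfspace_eq_cone hG hK h2 h3 h1.symm).symm⟩
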